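/- For every n ≥ 3, the derivative of the cycle domination polynomial at -1 satisfies: D'(C_n,-1) = -n if n ≡ 0 (mod 4), n if n ≡ 1 (mod 4), and 0 if n ≡ 2 or 3 (mod 4). -/

import Mathlib

open SimpleGraph Polynomial Finset

open Classical in
/-- The number of dominating sets of `G` of cardinality `i`. -/
noncomputable def domCount {V : Type*} [Fintype V] [DecidableEq V]
    (G : SimpleGraph V) (i : ℕ) : ℕ :=
  (Finset.univ.filter fun S : Finset V =>
    S.card = i ∧ ∀ v : V, v ∈ S ∨ ∃ u ∈ S, G.Adj u v).card

/-- The domination polynomial of `G`. -/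
noncomputable def domPoly {V : Type*} [Fintype V] [DecidableEq V]
    (G : SimpleGraph V) : Polynomial ℤ :=
  ∑ i ∈ Finset.range (Fintype.card V + 1), Polynomial.C (domCount G i : ℤ) * Polynomial.X ^ i

/-- The domination number of `G`. -/
noncomputable def domNum {V : Type*} [Fintype V] [DecidableEq V] (G : SimpleGraph V) : ℕ :=
  sInf {i | ∃ S : Finset V, S.card = i ∧ ∀ v : V, v ∈ S ∨ ∃ u ∈ S, G.Adj u v}

/-! ### Signed counting of binary strings with no three consecutive `false`s -/

/-- no three consecutive `false`s -/
def ok : List Bool → Bool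
  | false :: false :: false :: _ => false
  | _ :: l => ok l
  | [] => true

def sgn (l : List Bool) : ℤ := (l.map fun b => if b then -1 else 1).prod

def w (l : List Bool) : ℤ := if ok l then sgn l else 0

def g (m : ℕ) : ℤ := ∑ f : Fin m → Bool, w (List.ofFn f)

lemma ok_true_cons (l : List Bool) : ok (true :: l) = ok l := by cases l with
  | nil => rfl
  | cons a l => cases a <;> rfl

lemma ok_ft (l : List Bool) : ok (false :: true :: l) = ok l := rfl
lemma ok_fft (l : List Bool) : ok (false :: false :: true :: l) = ok l := rfl
lemma ok_fff (l : List Bool) : ok (false :: false :: false :: l) = false := rfl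

lemma sgn_cons (b : Bool) (l : List Bool) :
    sgn (b :: l) = (if b then -1 else 1) * sgn l := by simp [sgn]

lemma w_t (l : List Bool) : w (true :: l) = -(w l) := by
  simp only [w, ok_true_cons, sgn_cons]; split <;> simp
lemma w_ft (l : List Bool) : w (false :: true :: l) = -(w l) := by
  simp only [w, ok_ft, sgn_cons]; split <;> simp
lemma w_fft (l : List Bool) : w (false :: false :: true :: l) = -(w l) := by
  simp only [w, ok_fft, sgn_cons]; split <;> simp
lemma w_fff (l : List Bool) : w (false :: false :: false :: l) = 0 := by
  simp [w, ok_fff]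

lemma split_sum (F : List Bool → ℤ) (k : ℕ) :
    ∑ f : Fin (k+1) → Bool, F (List.ofFn f)
      = ∑ f : Fin k → Bool, (F (true :: List.ofFn f) + F (false :: List.ofFn f)) := by
  rw [← (Fin.consEquiv (fun _ : Fin (k+1) => Bool)).sum_comp
    (fun f => F (List.ofFn f))]
  rw [Fintype.sum_prod_type, Fintype.sum_bool]
  rw [← Finset.sum_add_distrib]
  congr 1; ext f
  simp [Fin.consEquiv, List.ofFn_succ, Fin.cons_zero, Fin.cons_succ]

def g1 (m : ℕ) : ℤ := ∑ f : Fin m → Bool, w (false :: List.ofFn f)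
def g2 (m : ℕ) : ℤ := ∑ f : Fin m → Bool, w (false :: false :: List.ofFn f)

lemma g_succ (k : ℕ) : g (k+1) = -(g k) + g1 k := by
  rw [g, split_sum, Finset.sum_add_distrib]
  simp [g, g1, w_t, Finset.sum_neg_distrib]

lemma g1_succ (k : ℕ) : g1 (k+1) = -(g k) + g2 k := by
  rw [g1, split_sum (fun l => w (false :: l)), Finset.sum_add_distrib]
  simp [g, g2, w_ft, Finset.sum_neg_distrib]

lemma g2_succ (k : ℕ) : g2 (k+1) = -(g k) := by
  rw [g2, split_sum (fun l => w (false :: false :: l)), Finset.sum_add_distrib]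
  simp [g, w_fft, w_fff, Finset.sum_neg_distrib]

lemma g_rec (k : ℕ) : g (k+3) = -(g (k+2)) - g (k+1) - g k := by
  rw [g_succ (k+2), g1_succ (k+1), g2_succ k]; ring

lemma g_zero : g 0 = 1 := by decide
lemma g_one : g 1 = 0 := by decide
lemma g_two : g 2 = 0 := by decide
lemma g_three : g 3 = -1 := by decide

lemma g_period (k : ℕ) : g (k+4) = g k := by
  have h1 := g_rec (k+1)
  have h2 := g_rec k
  have e1 : k+1+3 = k+4 := by ring
  rw [e1] at h1
  have e2 : k+1+2 = k+3 := by ring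
  rw [e2] at h1
  have e3 : k+1+1 = k+2 := by ring
  rw [e3] at h1
  rw [h1, h2]; ring

lemma g_val : ∀ m : ℕ, g m = if m % 4 = 0 then 1 else if m % 4 = 3 then -1 else 0
  | 0 => by simpa using g_zero
  | 1 => by simpa using g_one
  | 2 => by simpa using g_two
  | 3 => by simpa using g_three
  | (k+4) => by
      rw [g_period, g_val k, Nat.add_mod_right]

/-! ### `ok` in terms of positions -/

def cnd (l : List Bool) (k : ℕ) : Prop :=
  (l.getD k true || l.getD (k+1) true || l.getD (k+2) true) = true

lemma cnd_shift (b : Bool) (l : List Bool) :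
    (∀ k, cnd (b :: l) k) ↔ cnd (b :: l) 0 ∧ ∀ k, cnd l k := by
  constructor
  · intro h
    refine ⟨h 0, fun k => ?_⟩
    have := h (k+1)
    simpa [cnd, List.getD_cons_succ] using this
  · rintro ⟨h0, h⟩ k
    cases k with
    | zero => exact h0
    | succ k => simpa [cnd, List.getD_cons_succ] using h k

lemma ok_eq_of_ne (head : Bool) (l : List Bool)
    (hne : ∀ (tail : List Bool), head = false → l = false :: false :: tail → False) :
    ok (head :: l) = ok l := by
  cases head
  · match l with
    | [] => rfl
    | true :: t => rfl
    | [false] => rfl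
    | false :: true :: t => rfl
    | false :: false :: t => exact absurd (hne t rfl rfl) (fun h => h)
  · match l with
    | [] => rfl
    | true :: t => rfl
    | false :: t => rfl

lemma cnd_zero_of_ne (head : Bool) (l : List Bool)
    (hne : ∀ (tail : List Bool), head = false → l = false :: false :: tail → False) :
    cnd (head :: l) 0 := by
  cases head
  · match l with
    | [] => rfl
    | true :: t => rfl
    | [false] => rfl
    | false :: true :: t => rfl
    | false :: false :: t => exact absurd (hne t rfl rfl) (fun h => h)
  · rfl

lemma ok_iff (l : List Bool) : ok l = true ↔ ∀ k, cnd l k := by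
  induction l using ok.induct with
  | case1 t =>
    constructor
    · intro h; exact absurd h (by simp [ok])
    · intro h; exact absurd (h 0) (by simp [cnd])
  | case2 head l hne ih =>
    rw [ok_eq_of_ne head l hne, cnd_shift, ih]
    simp [cnd_zero_of_ne head l hne]
  | case3 =>
    constructor
    · intro _ k; simp [cnd, List.getD]
    · intro _; rfl

lemma getD_ofFn {n : ℕ} (f : Fin n → Bool) (i : ℕ) :
    (List.ofFn f).getD i true = if h : i < n then f ⟨i,h⟩ else true := by
  rw [List.getD_eq_getElem?_getD, List.getElem?_ofFn]
  split <;> simp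

/-! ### Derivative of the domination polynomial as a sum over dominating sets -/

open Classical in
lemma deriv_eval {V : Type*} [Fintype V] [DecidableEq V] (G : SimpleGraph V) :
    (derivative (domPoly G)).eval (-1) =
    ∑ S ∈ univ.filter (fun S : Finset V => ∀ v, v ∈ S ∨ ∃ u ∈ S, G.Adj u v),
      (S.card : ℤ) * (-1) ^ (S.card - 1) := by
  classical
  have h1 : (derivative (domPoly G)).eval (-1)
      = ∑ i ∈ Finset.range (Fintype.card V + 1),
          (domCount G i : ℤ) * ((i : ℤ) * (-1) ^ (i - 1)) := by
    rw [domPoly, map_sum, eval_finset_sum]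
    refine Finset.sum_congr rfl fun i _ => ?_
    rw [derivative_C_mul, derivative_X_pow]
    simp [mul_assoc]
  rw [h1]
  rw [← Finset.sum_fiberwise_of_maps_to (g := fun S : Finset V => S.card)
      (t := Finset.range (Fintype.card V + 1))
      (fun S _ => Finset.mem_range.2 (Nat.lt_succ_of_le (Finset.card_le_univ S)))
      (fun S => (S.card : ℤ) * (-1) ^ (S.card - 1))]
  refine Finset.sum_congr rfl fun i _ => ?_
  have h2 : ∑ S ∈ (univ.filter (fun S : Finset V => ∀ v, v ∈ S ∨ ∃ u ∈ S, G.Adj u v)).filter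
        (fun S => S.card = i), (S.card : ℤ) * (-1) ^ (S.card - 1)
      = ∑ S ∈ (univ.filter (fun S : Finset V => ∀ v, v ∈ S ∨ ∃ u ∈ S, G.Adj u v)).filter
        (fun S => S.card = i), ((i : ℤ) * (-1) ^ (i - 1)) := by
    refine Finset.sum_congr rfl fun S hS => ?_
    rw [(Finset.mem_filter.1 hS).2]
  rw [h2, Finset.sum_const, Finset.filter_filter, domCount]
  have h3 : ((univ.filter fun S : Finset V =>
      (∀ v, v ∈ S ∨ ∃ u ∈ S, G.Adj u v) ∧ S.card = i)).card
      = ((univ.filter fun S : Finset V =>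
      S.card = i ∧ ∀ v, v ∈ S ∨ ∃ u ∈ S, G.Adj u v)).card := by
    congr 1
    apply Finset.filter_congr
    intro S _
    exact ⟨fun h => ⟨h.2, h.1⟩, fun h => ⟨h.2, h.1⟩⟩
  rw [h3]
  simp [mul_comm]

/-! ### The cycle-specific part -/

section cyc
variable {m : ℕ}

open Classical
open Fin.CommRing

def dom (S : Finset (Fin (m+3))) : Prop :=
  ∀ v, v ∈ S ∨ ∃ u ∈ S, (cycleGraph (m+3)).Adj u v


lemma deriv_eval' :
    (derivative (domPoly (cycleGraph (m+3)))).eval (-1) =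
    ∑ S ∈ univ.filter (fun S : Finset (Fin (m+3)) => dom S),
      (S.card : ℤ) * (-1) ^ (S.card - 1) := by
  have h1 : (derivative (domPoly (cycleGraph (m+3)))).eval (-1)
      = ∑ i ∈ Finset.range (Fintype.card (Fin (m+3)) + 1),
          (domCount (cycleGraph (m+3)) i : ℤ) * ((i : ℤ) * (-1) ^ (i - 1)) := by
    rw [domPoly, map_sum, eval_finset_sum]
    refine Finset.sum_congr rfl fun i _ => ?_
    rw [derivative_C_mul, derivative_X_pow]
    simp [mul_assoc]
  rw [h1]
  rw [← Finset.sum_fiberwise_of_maps_to (g := fun S : Finset (Fin (m+3)) => S.card)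
      (t := Finset.range (Fintype.card (Fin (m+3)) + 1))
      (fun S _ => Finset.mem_range.2 (Nat.lt_succ_of_le (Finset.card_le_univ S)))
      (fun S => (S.card : ℤ) * (-1) ^ (S.card - 1))]
  refine Finset.sum_congr rfl fun i _ => ?_
  have h2 : ∑ S ∈ (univ.filter (fun S : Finset (Fin (m+3)) => dom S)).filter
        (fun S => S.card = i), (S.card : ℤ) * (-1) ^ (S.card - 1)
      = ∑ S ∈ (univ.filter (fun S : Finset (Fin (m+3)) => dom S)).filter
        (fun S => S.card = i), ((i : ℤ) * (-1) ^ (i - 1)) := by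
    refine Finset.sum_congr rfl fun S hS => ?_
    rw [(Finset.mem_filter.1 hS).2]
  rw [h2, Finset.sum_const, Finset.filter_filter]
  have h3 : domCount (cycleGraph (m+3)) i
      = ((univ.filter fun S : Finset (Fin (m+3)) => dom S ∧ S.card = i)).card := by
    unfold domCount
    congr 1
    ext S
    simp only [Finset.mem_filter]
    exact ⟨fun h => ⟨h.1, h.2.2, h.2.1⟩, fun h => ⟨h.1, h.2.2, h.2.1⟩⟩
  rw [h3, nsmul_eq_mul]

noncomputable def B (v : Fin (m+3)) : ℤ :=
  ∑ S ∈ univ.filter (fun S : Finset (Fin (m+3)) => dom S ∧ v ∈ S), (-1 : ℤ) ^ (S.card - 1)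

lemma sum_swap_lemma :
    ∑ S ∈ univ.filter (fun S : Finset (Fin (m+3)) => dom S),
      (S.card : ℤ) * (-1) ^ (S.card - 1) = ∑ v : Fin (m+3), B v := by
  have h1 : ∀ S : Finset (Fin (m+3)), (S.card : ℤ) * (-1) ^ (S.card - 1)
      = ∑ v : Fin (m+3), if v ∈ S then (-1 : ℤ) ^ (S.card - 1) else 0 := by
    intro S
    rw [Finset.sum_ite_mem, Finset.univ_inter, Finset.sum_const, nsmul_eq_mul]
  calc ∑ S ∈ univ.filter (fun S : Finset (Fin (m+3)) => dom S),
        (S.card : ℤ) * (-1) ^ (S.card - 1)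
      = ∑ S ∈ univ.filter (fun S : Finset (Fin (m+3)) => dom S),
        ∑ v : Fin (m+3), if v ∈ S then (-1 : ℤ) ^ (S.card - 1) else 0 :=
        Finset.sum_congr rfl fun S _ => h1 S
    _ = ∑ v : Fin (m+3), ∑ S ∈ univ.filter (fun S : Finset (Fin (m+3)) => dom S),
        (if v ∈ S then (-1 : ℤ) ^ (S.card - 1) else 0) := Finset.sum_comm
    _ = ∑ v : Fin (m+3), B v := by
        refine Finset.sum_congr rfl fun v _ => ?_
        rw [B, Finset.sum_filter, Finset.sum_filter]
        refine Finset.sum_congr rfl fun S _ => ?_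
        by_cases hd : dom S <;> by_cases hv : v ∈ S <;> simp [hd, hv]

lemma dom_rot (t : Fin (m+3)) (S : Finset (Fin (m+3))) (h : dom S) :
    dom (S.image (t + ·)) := by
  intro v
  rcases h (-t + v) with hv | ⟨u, hu, hadj⟩
  · left
    exact Finset.mem_image.2 ⟨-t + v, hv, by ring⟩
  · right
    refine ⟨t + u, Finset.mem_image.2 ⟨u, hu, rfl⟩, ?_⟩
    rw [cycleGraph_adj] at hadj ⊢
    rcases hadj with h' | h'
    · left; rw [← h']; ring
    · right; rw [← h']; ring

lemma card_rot (t : Fin (m+3)) (S : Finset (Fin (m+3))) :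
    (S.image (t + ·)).card = S.card :=
  Finset.card_image_of_injective _ (add_right_injective t)

lemma B_eq (v : Fin (m+3)) : B v = B (0 : Fin (m+3)) := by
  rw [B, B]
  refine Finset.sum_nbij' (i := fun S => S.image ((-v) + ·)) (j := fun S => S.image (v + ·))
    ?_ ?_ ?_ ?_ ?_
  · intro S hS
    rcases Finset.mem_filter.1 hS with ⟨_, hd, hv⟩
    refine Finset.mem_filter.2 ⟨Finset.mem_univ _, dom_rot _ _ hd, ?_⟩
    exact Finset.mem_image.2 ⟨v, hv, by ring⟩
  · intro S hS
    rcases Finset.mem_filter.1 hS with ⟨_, hd, hv⟩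
    refine Finset.mem_filter.2 ⟨Finset.mem_univ _, dom_rot _ _ hd, ?_⟩
    exact Finset.mem_image.2 ⟨0, hv, by ring⟩
  · intro S _
    rw [Finset.image_image]
    have : ((fun x => v + x) ∘ (fun x => -v + x)) = id := by funext x; simp
    rw [this, Finset.image_id]
  · intro S _
    rw [Finset.image_image]
    have : ((fun x => -v + x) ∘ (fun x => v + x)) = id := by funext x; simp
    rw [this, Finset.image_id]
  · intro S _
    rw [card_rot]

/-! ### The bijection with strings -/

noncomputable def toS (f : Fin (m+2) → Bool) : Finset (Fin (m+3)) :=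
  insert 0 ((univ.filter fun i => f i = true).image Fin.succ)

def fromF (S : Finset (Fin (m+3))) : Fin (m+2) → Bool := fun i => decide (i.succ ∈ S)

lemma mem_toS (f : Fin (m+2) → Bool) : (0 : Fin (m+3)) ∈ toS f :=
  Finset.mem_insert_self _ _

lemma fromF_toS (f : Fin (m+2) → Bool) : fromF (toS f) = f := by
  funext i
  have hm : (i.succ ∈ toS f) ↔ f i = true := by
    simp only [toS, Finset.mem_insert, Finset.mem_image, Finset.mem_filter,
      Finset.mem_univ, true_and]
    constructor
    · rintro (h | ⟨j, hj, hji⟩)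
      · exact absurd h (Fin.succ_ne_zero i)
      · rwa [← Fin.succ_injective _ hji]
    · intro h
      right
      exact ⟨i, h, rfl⟩
  simp [fromF, hm]

lemma toS_fromF (S : Finset (Fin (m+3))) (h0 : (0 : Fin (m+3)) ∈ S) :
    toS (fromF S) = S := by
  ext v
  simp only [toS, fromF, Finset.mem_insert, Finset.mem_image, Finset.mem_filter,
    Finset.mem_univ, true_and, decide_eq_true_iff]
  constructor
  · rintro (rfl | ⟨j, hj, rfl⟩)
    · exact h0
    · exact hj
  · intro hv
    by_cases hv0 : v = 0
    · exact Or.inl hv0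
    · right
      exact ⟨v.pred hv0, by rwa [Fin.succ_pred], Fin.succ_pred v hv0⟩

lemma sgn_fromF (S : Finset (Fin (m+3))) (h0 : (0 : Fin (m+3)) ∈ S) :
    sgn (List.ofFn (fromF S)) = (-1) ^ (S.card - 1) := by
  rw [sgn, List.map_ofFn, List.prod_ofFn]
  have h1 : ∀ i : Fin (m+2), ((fun b => if b then (-1:ℤ) else 1) ∘ fromF S) i
      = if i.succ ∈ S then (-1:ℤ) else 1 := by
    intro i; simp [fromF]
  rw [Finset.prod_congr rfl (fun i _ => h1 i)]
  have key : ∏ v : Fin (m+3), (if v ∈ S then (-1:ℤ) else 1) = (-1) ^ S.card := by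
    rw [Finset.prod_ite_mem, Finset.univ_inter, Finset.prod_const]
  rw [Fin.prod_univ_succ] at key
  rw [if_pos h0] at key
  have hpos : 1 ≤ S.card := Finset.card_pos.2 ⟨0, h0⟩
  have hcard : S.card = (S.card - 1) + 1 := by omega
  rw [hcard, pow_succ] at key
  have := mul_left_cancel₀ (show (-1:ℤ) ≠ 0 by norm_num)
    (by rw [key]; ring : (-1:ℤ) * ∏ i : Fin (m+2), (if i.succ ∈ S then (-1:ℤ) else 1)
      = (-1) * ((-1) ^ (S.card - 1)))
  exact this

lemma dom_iff (S : Finset (Fin (m+3))) :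
    dom S ↔ ∀ v : Fin (m+3), v ∈ S ∨ v + 1 ∈ S ∨ v - 1 ∈ S := by
  unfold dom
  refine forall_congr' fun v => or_congr_right ?_
  constructor
  · rintro ⟨u, hu, hadj⟩
    rw [cycleGraph_adj] at hadj
    rcases hadj with h' | h'
    · left; have : v + 1 = u := by rw [← h']; ring
      rwa [this]
    · right; have : v - 1 = u := by rw [← h']; ring
      rwa [this]
  · rintro (h | h)
    · exact ⟨v + 1, h, by rw [cycleGraph_adj]; left; ring⟩
    · exact ⟨v - 1, h, by rw [cycleGraph_adj]; right; ring⟩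

lemma cnd_iff (S : Finset (Fin (m+3))) (k : ℕ) :
    cnd (List.ofFn (fromF S)) k ↔
    ∀ _ : k < m, ((⟨k+1, by omega⟩ : Fin (m+3)) ∈ S ∨ (⟨k+2, by omega⟩ : Fin (m+3)) ∈ S ∨
      (⟨k+3, by omega⟩ : Fin (m+3)) ∈ S) := by
  unfold cnd
  rw [getD_ofFn, getD_ofFn, getD_ofFn]
  by_cases hk : k < m
  · rw [dif_pos (by omega : k < m+2), dif_pos (by omega : k+1 < m+2),
      dif_pos (by omega : k+2 < m+2)]
    simp only [fromF, Bool.or_eq_true, decide_eq_true_iff]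
    have s1 : (⟨k, by omega⟩ : Fin (m+2)).succ = (⟨k+1, by omega⟩ : Fin (m+3)) := by
      apply Fin.ext; simp
    have s2 : (⟨k+1, by omega⟩ : Fin (m+2)).succ = (⟨k+2, by omega⟩ : Fin (m+3)) := by
      apply Fin.ext; simp
    have s3 : (⟨k+2, by omega⟩ : Fin (m+2)).succ = (⟨k+3, by omega⟩ : Fin (m+3)) := by
      apply Fin.ext; simp
    rw [s1, s2, s3]
    simp only [hk, forall_true_left]
    tauto
  · rw [dif_neg (by omega : ¬ k+2 < m+2)]
    simp [hk]

set_option maxHeartbeats 1000000 in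
lemma dom_iff_ok (S : Finset (Fin (m+3))) (h0 : (0 : Fin (m+3)) ∈ S) :
    dom S ↔ ok (List.ofFn (fromF S)) = true := by
  rw [ok_iff, dom_iff]
  constructor
  · intro h k
    rw [cnd_iff]
    intro hk
    have hv := h ⟨k+2, by omega⟩
    have e1 : (⟨k+2, by omega⟩ : Fin (m+3)) + 1 = ⟨k+3, by omega⟩ := by
      apply Fin.ext
      rw [Fin.add_def, Fin.val_one]
      show (k + 2 + 1) % (m+3) = k+3
      exact Nat.mod_eq_of_lt (by omega)
    have e2 : (⟨k+2, by omega⟩ : Fin (m+3)) - 1 = ⟨k+1, by omega⟩ := by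
      apply Fin.ext
      rw [Fin.sub_def, Fin.val_one]
      show (m + 3 - 1 + (k+2)) % (m+3) = k+1
      have e : m + 3 - 1 + (k+2) = (k+1) + (m+3) := by omega
      rw [e, Nat.add_mod_right, Nat.mod_eq_of_lt (by omega)]
    rw [e1, e2] at hv
    tauto
  · intro h v
    rcases v with ⟨j, hj⟩
    rcases Nat.lt_or_ge j 2 with hj2 | hj2
    · interval_cases j
      · left; exact h0
      · right; right
        have : (⟨1, hj⟩ : Fin (m+3)) - 1 = 0 := by
          apply Fin.ext
          rw [Fin.sub_def, Fin.val_one]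
          show (m + 3 - 1 + 1) % (m+3) = 0
          have e : m + 3 - 1 + 1 = m+3 := by omega
          rw [e, Nat.mod_self]
        rwa [this]
    · rcases Nat.lt_or_ge j (m+2) with hj3 | hj3
      · have hk : j - 2 < m := by omega
        have := (cnd_iff S (j-2)).1 (h (j-2)) hk
        have e0 : (⟨j-2+2, by omega⟩ : Fin (m+3)) = ⟨j, hj⟩ := by
          apply Fin.ext; simp; omega
        have e1 : (⟨j, hj⟩ : Fin (m+3)) + 1 = ⟨j-2+3, by omega⟩ := by
          apply Fin.ext
          rw [Fin.add_def, Fin.val_one]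
          show (j + 1) % (m+3) = j-2+3
          rw [Nat.mod_eq_of_lt (by omega)]
          omega
        have e2 : (⟨j, hj⟩ : Fin (m+3)) - 1 = ⟨j-2+1, by omega⟩ := by
          apply Fin.ext
          rw [Fin.sub_def, Fin.val_one]
          show (m + 3 - 1 + j) % (m+3) = j-2+1
          have e : m + 3 - 1 + j = (j-1) + (m+3) := by omega
          rw [e, Nat.add_mod_right, Nat.mod_eq_of_lt (by omega)]
          omega
        rw [e0] at this
        rw [e1, e2]
        tauto
      · have hj4 : j = m + 2 := by omega
        right; left
        have : (⟨j, hj⟩ : Fin (m+3)) + 1 = 0 := by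
          apply Fin.ext
          rw [Fin.add_def, Fin.val_one]
          show (j + 1) % (m+3) = 0
          rw [hj4]
          rw [Nat.mod_self]
        rwa [this]

lemma B_zero : B (0 : Fin (m+3)) = g (m+2) := by
  rw [B, g]
  have hw : ∀ f : Fin (m+2) → Bool, w (List.ofFn f)
      = if ok (List.ofFn f) = true then sgn (List.ofFn f) else 0 := by
    intro f; rw [w]
  rw [Finset.sum_congr rfl (fun f _ => hw f), ← Finset.sum_filter]
  refine Finset.sum_nbij' (i := fromF) (j := toS) ?_ ?_ ?_ ?_ ?_
  · intro S hS
    rcases Finset.mem_filter.1 hS with ⟨_, hd, h0⟩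
    exact Finset.mem_filter.2 ⟨Finset.mem_univ _, (dom_iff_ok S h0).1 hd⟩
  · intro f hf
    have hok := (Finset.mem_filter.1 hf).2
    refine Finset.mem_filter.2 ⟨Finset.mem_univ _, ?_, mem_toS f⟩
    rw [dom_iff_ok _ (mem_toS f), fromF_toS]
    exact hok
  · intro S hS
    exact toS_fromF S (Finset.mem_filter.1 hS).2.2
  · intro f _
    exact fromF_toS f
  · intro S hS
    exact (sgn_fromF S (Finset.mem_filter.1 hS).2.2).symm

end cyc

set_option maxHeartbeats 1000000 in
theorem domPoly_cycle_deriv_neg_one (n : ℕ) (hn : 3 ≤ n) :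
    (n % 4 = 0 → (derivative (domPoly (cycleGraph n))).eval (-1) = -(n : ℤ)) ∧
    (n % 4 = 1 → (derivative (domPoly (cycleGraph n))).eval (-1) = (n : ℤ)) ∧
    (n % 4 = 2 ∨ n % 4 = 3 → (derivative (domPoly (cycleGraph n))).eval (-1) = 0) := by
  obtain ⟨m, rfl⟩ : ∃ m, n = m + 3 := ⟨n - 3, by omega⟩
  have hE : (derivative (domPoly (cycleGraph (m+3)))).eval (-1)
      = ((m : ℤ) + 3) * g (m+2) := by
    rw [deriv_eval', sum_swap_lemma]
    rw [Finset.sum_congr rfl (fun v _ => B_eq v), Finset.sum_const, Finset.card_univ,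
      Fintype.card_fin, B_zero, nsmul_eq_mul]
    push_cast
    ring
  rw [g_val] at hE
  refine ⟨fun h4 => ?_, fun h4 => ?_, fun h4 => ?_⟩
  · have : (m+2) % 4 = 3 := by omega
    rw [hE, if_neg (by omega), if_pos this]
    push_cast
    ring
  · have : (m+2) % 4 = 0 := by omega
    rw [hE, if_pos this]
    push_cast
    ring
  · have h1 : ¬ (m+2) % 4 = 0 := by omega
    have h2 : ¬ (m+2) % 4 = 3 := by omega
    rw [hE, if_neg h1, if_neg h2]
    ring
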